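/- Let λ = (λ_1,...,λ_M) with 0 ≤ λ_1 ≤ ... ≤ λ_M. If there exists a semistandard Young tableau T of shape λ with entries in {1,...,M} and weight vector α(T) = (α_1(T),...,α_M(T)), then for every permutation τ of {1,...,M} there exists a semistandard Young tableau T′ of shape λ with entries in {1,...,M} whose weight vector is the permuted vector (α_{τ^{-1}(1)}(T),...,α_{τ^{-1}(M)}(T)). -/

import Mathlib

/-- Predicate: `e` is a semistandard filling of shape `lam` (sorted nondecreasingly),
where row `i` (0-indexed from the top) has `lam i.rev` boxes, entries are in `Fin M`,
rows weakly increase and columns strictly increase downwards. -/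
def IsSSYT {M : ℕ} (lam : Fin M → ℕ) (e : ∀ i : Fin M, Fin (lam i.rev) → Fin M) : Prop :=
  (∀ (i : Fin M) (j j' : Fin (lam i.rev)), j ≤ j' → e i j ≤ e i j') ∧
  (∀ (i i' : Fin M), i < i' → ∀ (j : Fin (lam i'.rev)) (hj : (j : ℕ) < lam i.rev),
      e i ⟨j, hj⟩ < e i' j)

instance {M : ℕ} (lam : Fin M → ℕ) : DecidablePred (IsSSYT lam) := fun _ => by
  unfold IsSSYT; infer_instance

/-- Semistandard Young tableaux of shape `lam` (sorted nondecreasingly) with entries in `Fin M`. -/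
def SSYT (M : ℕ) (lam : Fin M → ℕ) : Type :=
  {e : ∀ i : Fin M, Fin (lam i.rev) → Fin M // IsSSYT lam e}

instance {M : ℕ} (lam : Fin M → ℕ) : Fintype (SSYT M lam) :=
  Subtype.fintype _

/-- The weight vector of a tableau: `T.weight k` is the number of boxes containing entry `k`. -/
def SSYT.weight {M : ℕ} {lam : Fin M → ℕ} (T : SSYT M lam) (k : Fin M) : ℕ :=
  ∑ i : Fin M, (Finset.univ.filter fun j : Fin (lam i.rev) => T.1 i j = k).card

/-- The Schur polynomial of shape `lam` via Young's rule (sum over all SSYTs of the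
monomials given by the weight vectors). -/
noncomputable def schur (M : ℕ) (lam : Fin M → ℕ) (z : Fin M → ℂ) : ℂ :=
  ∑ T : SSYT M lam, ∏ i : Fin M, z i ^ T.weight i

namespace BKX

open Finset

/-- A finite downward-closed set of naturals bounded by `K` is an initial segment. -/
lemma count_lower {P : ℕ → Prop} [DecidablePred P] {K : ℕ} (hK : ∀ j, P j → j < K)
    (hdown : ∀ j j', j ≤ j' → P j' → P j) (j : ℕ) :
    P j ↔ j < ((Finset.range K).filter P).card := by
  constructor
  · intro hj
    have hsub : Finset.range (j + 1) ⊆ (Finset.range K).filter P := by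
      intro x hx
      rw [Finset.mem_range] at hx
      have hPx : P x := hdown x j (by omega) hj
      exact Finset.mem_filter.mpr ⟨Finset.mem_range.mpr (hK x hPx), hPx⟩
    have := Finset.card_le_card hsub
    rw [Finset.card_range] at this
    omega
  · intro hj
    by_contra hPj
    have hsub : (Finset.range K).filter P ⊆ Finset.range j := by
      intro x hx
      rw [Finset.mem_filter] at hx
      rw [Finset.mem_range]
      by_contra hxj
      exact hPj (hdown j x (by omega) hx.2)
    have := Finset.card_le_card hsub
    rw [Finset.card_range] at this
    omega

lemma col_trans {M : ℕ} {F : ℕ → ℕ → ℕ}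
    (hcol : ∀ i j, F (i + 1) j < M → F i j < F (i + 1) j) :
    ∀ i i' j, i < i' → F i' j < M → F i j < F i' j := by
  intro i i' j hii' h
  induction i' with
  | zero => omega
  | succ n ih =>
    rcases Nat.lt_or_ge i n with h' | h'
    · have hn : F n j < F (n + 1) j := hcol n j h
      exact lt_trans (ih h' (lt_trans hn h)) hn
    · have : i = n := by omega
      subst this
      exact hcol i j h

variable {M : ℕ} (lam : Fin M → ℕ) (e : ∀ i : Fin M, Fin (lam i.rev) → Fin M)

/-- Bound on all row lengths. -/
def K : ℕ := Finset.univ.sup lam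

/-- Padded version of the filling: `M` outside the diagram. -/
def E (i j : ℕ) : ℕ :=
  if h : i < M then
    if h2 : j < lam (Fin.rev ⟨i, h⟩) then (e ⟨i, h⟩ ⟨j, h2⟩ : ℕ) else M
  else M

lemma E_le (i j : ℕ) : E lam e i j ≤ M := by
  unfold E
  split_ifs with h h2
  · exact le_of_lt (e ⟨i, h⟩ ⟨j, h2⟩).isLt
  · exact le_refl M
  · exact le_refl M

lemma E_val (i : Fin M) (j : Fin (lam i.rev)) : E lam e i.val j.val = (e i j : ℕ) := by
  unfold E
  rw [dif_pos i.isLt, dif_pos (show j.val < lam (Fin.rev ⟨i.val, i.isLt⟩) from j.isLt)]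

lemma E_pad (i j : ℕ) (h : ∀ hi : i < M, lam (Fin.rev ⟨i, hi⟩) ≤ j) : E lam e i j = M := by
  unfold E
  split_ifs with h1 h2
  · exact absurd h2 (by have := h h1; omega)
  · rfl
  · rfl

lemma len_le_K (i : ℕ) (hi : i < M) : lam (Fin.rev ⟨i, hi⟩) ≤ K lam :=
  Finset.le_sup (Finset.mem_univ _)

lemma lt_K_of_E_lt (i j : ℕ) (h : E lam e i j < M) : j < K lam := by
  unfold E at h
  split_ifs at h with h1 h2
  · exact lt_of_lt_of_le h2 (len_le_K lam i h1)
  · omega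
  · omega

lemma E_mono (he : IsSSYT lam e) (i : ℕ) : Monotone (E lam e i) := by
  apply monotone_nat_of_le_succ
  intro j
  by_cases h1 : i < M
  · by_cases h3 : j + 1 < lam (Fin.rev ⟨i, h1⟩)
    · have h2 : j < lam (Fin.rev ⟨i, h1⟩) := by omega
      rw [E, dif_pos h1, dif_pos h2]
      conv_rhs => rw [E, dif_pos h1, dif_pos h3]
      have := he.1 ⟨i, h1⟩ ⟨j, h2⟩ ⟨j + 1, h3⟩ (by simp [Fin.mk_le_mk])
      exact_mod_cast this
    · have hright : E lam e i (j + 1) = M := by rw [E, dif_pos h1, dif_neg h3]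
      rw [hright]
      exact E_le lam e i j
  · simp [E, h1]

lemma E_col (he : IsSSYT lam e) (hlam : Monotone lam) (i j : ℕ)
    (h : E lam e (i + 1) j < M) :
    E lam e i j < E lam e (i + 1) j := by
  rw [E] at h
  split_ifs at h with h1 h2
  · have hi : i < M := by omega
    have hlen : lam (Fin.rev ⟨i + 1, h1⟩) ≤ lam (Fin.rev ⟨i, hi⟩) := by
      apply hlam
      simp only [Fin.rev, Fin.mk_le_mk]
      omega
    have h2' : j < lam (Fin.rev ⟨i, hi⟩) := lt_of_lt_of_le h2 hlen
    rw [E, dif_pos hi, dif_pos h2']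
    conv_rhs => rw [E, dif_pos h1, dif_pos h2]
    have := he.2 ⟨i, hi⟩ ⟨i + 1, h1⟩ (by simp [Fin.lt_def]) ⟨j, h2⟩ h2'
    exact_mod_cast this
  · omega
  · omega

/-- `w b i` = number of entries `< b` in row `i`. -/
def w (b i : ℕ) : ℕ := ((Finset.range (K lam)).filter fun j => E lam e i j < b).card

lemma w_iff (he : IsSSYT lam e) {b : ℕ} (hb : b ≤ M) (i j : ℕ) :
    E lam e i j < b ↔ j < w lam e b i :=
  count_lower (fun j hj => lt_K_of_E_lt lam e i j (lt_of_lt_of_le hj hb))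
    (fun j j' hjj' h => lt_of_le_of_lt (E_mono lam e he i hjj') h) j

lemma w_le (he : IsSSYT lam e) {b b' : ℕ} (hbb' : b ≤ b') (hb' : b' ≤ M) (i : ℕ) :
    w lam e b i ≤ w lam e b' i := by
  by_contra hcon
  push_neg at hcon
  have h1 : E lam e i (w lam e b' i) < b :=
    (w_iff lam e he (le_trans hbb' hb') i _).mpr hcon
  have h2 : ¬E lam e i (w lam e b' i) < b' := by
    rw [w_iff lam e he hb']
    omega
  omega

lemma eq_iff (he : IsSSYT lam e) {b : ℕ} (hb : b + 1 ≤ M) (i j : ℕ) :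
    E lam e i j = b ↔ (w lam e b i ≤ j ∧ j < w lam e (b + 1) i) := by
  have h1 := w_iff lam e he (show b ≤ M by omega) i j
  have h2 := w_iff lam e he hb i j
  omega

lemma w_top {b i : ℕ} (hb : b ≤ M) (hi : M ≤ i) : w lam e b i = 0 := by
  unfold w
  rw [Finset.card_eq_zero, Finset.filter_eq_empty_iff]
  intro j _
  rw [E_pad lam e i j (fun hI => absurd hI (by omega))]
  omega

/-- Number of "paired" `a`'s in row `i` (those with `a+1` directly below). -/
def c (a i : ℕ) : ℕ :=
  min (w lam e (a + 1) i) (w lam e (a + 2) (i + 1)) - w lam e a i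

/-- Number of "paired" `a+1`'s in row `i` (those with `a` directly above). -/
def d (a : ℕ) : ℕ → ℕ
  | 0 => 0
  | i + 1 => w lam e (a + 2) (i + 1) - max (w lam e (a + 1) (i + 1)) (w lam e a i)

/-- Threshold for the Bender–Knuth switched row. -/
def t (a i : ℕ) : ℕ :=
  w lam e a i + c lam e a i +
    ((w lam e (a + 2) i - w lam e (a + 1) i) - d lam e a i)

lemma below_ge (he : IsSSYT lam e) (hlam : Monotone lam) (a : ℕ) (hab : a + 1 < M)
    (i j : ℕ) (h : E lam e i j = a) : a + 1 ≤ E lam e (i + 1) j := by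
  rcases lt_or_ge (E lam e (i + 1) j) M with hm | hm
  · have := E_col lam e he hlam i j hm
    omega
  · omega

lemma paired_iff (he : IsSSYT lam e) (hlam : Monotone lam) (a : ℕ) (hab : a + 1 < M)
    (i j : ℕ) :
    (E lam e i j = a ∧ E lam e (i + 1) j = a + 1) ↔
      (w lam e a i ≤ j ∧ j < w lam e (a + 1) i ∧ j < w lam e (a + 2) (i + 1)) := by
  constructor
  · rintro ⟨h1, h2⟩
    have hA := (eq_iff lam e he (show a + 1 ≤ M by omega) i j).mp h1
    refine ⟨hA.1, hA.2, ?_⟩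
    exact (w_iff lam e he (show a + 2 ≤ M by omega) (i + 1) j).mp (by omega)
  · rintro ⟨hs, hu, hv⟩
    have h1 : E lam e i j = a :=
      (eq_iff lam e he (show a + 1 ≤ M by omega) i j).mpr ⟨hs, hu⟩
    have h2 : E lam e (i + 1) j < a + 2 :=
      (w_iff lam e he (show a + 2 ≤ M by omega) (i + 1) j).mpr hv
    have h3 := below_ge lam e he hlam a hab i j h1
    exact ⟨h1, by omega⟩

lemma paired_iff' (he : IsSSYT lam e) (hlam : Monotone lam) (a : ℕ) (hab : a + 1 < M)
    (i j : ℕ) :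
    (E lam e i j = a ∧ E lam e (i + 1) j = a + 1) ↔
      (max (w lam e (a + 1) (i + 1)) (w lam e a i) ≤ j ∧ j < w lam e (a + 2) (i + 1)) := by
  constructor
  · rintro ⟨h1, h2⟩
    have hA := (eq_iff lam e he (show a + 1 + 1 ≤ M by omega) (i + 1) j).mp h2
    have hs : w lam e a i ≤ j := by
      have hw := w_iff lam e he (show a ≤ M by omega) i j
      omega
    exact ⟨max_le hA.1 hs, hA.2⟩
  · rintro ⟨hm, hv⟩
    have hu' : w lam e (a + 1) (i + 1) ≤ j := le_trans (le_max_left _ _) hm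
    have hs : w lam e a i ≤ j := le_trans (le_max_right _ _) hm
    have h2 : E lam e (i + 1) j = a + 1 :=
      (eq_iff lam e he (show a + 1 + 1 ≤ M by omega) (i + 1) j).mpr ⟨hu', hv⟩
    have hcol : E lam e i j < a + 1 := by
      have := E_col lam e he hlam i j (by omega)
      omega
    have hnotlt : ¬E lam e i j < a := by
      rw [w_iff lam e he (show a ≤ M by omega)]
      omega
    exact ⟨by omega, h2⟩

lemma c_eq_d (he : IsSSYT lam e) (hlam : Monotone lam) (a : ℕ) (hab : a + 1 < M)
    (i : ℕ) : c lam e a i = d lam e a (i + 1) := by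
  have h1 : ((Finset.range (K lam)).filter fun j =>
      E lam e i j = a ∧ E lam e (i + 1) j = a + 1) =
      Finset.Ico (w lam e a i)
        (min (w lam e (a + 1) i) (w lam e (a + 2) (i + 1))) := by
    ext j
    simp only [Finset.mem_filter, Finset.mem_range, Finset.mem_Ico, lt_min_iff]
    constructor
    · rintro ⟨-, h⟩
      have := (paired_iff lam e he hlam a hab i j).mp h
      exact ⟨this.1, this.2.1, this.2.2⟩
    · rintro ⟨hx1, hx2, hx3⟩
      have hp := (paired_iff lam e he hlam a hab i j).mpr ⟨hx1, hx2, hx3⟩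
      exact ⟨lt_K_of_E_lt lam e i j (by omega), hp⟩
  have h2 : ((Finset.range (K lam)).filter fun j =>
      E lam e i j = a ∧ E lam e (i + 1) j = a + 1) =
      Finset.Ico (max (w lam e (a + 1) (i + 1)) (w lam e a i))
        (w lam e (a + 2) (i + 1)) := by
    ext j
    simp only [Finset.mem_filter, Finset.mem_range, Finset.mem_Ico]
    constructor
    · rintro ⟨-, h⟩
      exact (paired_iff' lam e he hlam a hab i j).mp h
    · rintro ⟨hx1, hx2⟩
      have hp := (paired_iff' lam e he hlam a hab i j).mpr ⟨hx1, hx2⟩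
      exact ⟨lt_K_of_E_lt lam e i j (by omega), hp⟩
  calc c lam e a i
      = (Finset.Ico (w lam e a i)
          (min (w lam e (a + 1) i) (w lam e (a + 2) (i + 1)))).card := by
        rw [Nat.card_Ico]; rfl
    _ = ((Finset.range (K lam)).filter fun j =>
          E lam e i j = a ∧ E lam e (i + 1) j = a + 1).card := by rw [h1]
    _ = (Finset.Ico (max (w lam e (a + 1) (i + 1)) (w lam e a i))
          (w lam e (a + 2) (i + 1))).card := by rw [h2]
    _ = d lam e a (i + 1) := by rw [Nat.card_Ico]; rfl

lemma c_le (a i : ℕ) : c lam e a i ≤ w lam e (a + 1) i - w lam e a i := by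
  unfold c
  omega

lemma d_le (a i : ℕ) : d lam e a i ≤ w lam e (a + 2) i - w lam e (a + 1) i := by
  cases i with
  | zero => simp [d]
  | succ n =>
    show w lam e (a + 2) (n + 1) - max _ _ ≤ _
    omega

lemma t_bounds (he : IsSSYT lam e) (a : ℕ) (hab : a + 1 < M) (i : ℕ) :
    w lam e a i ≤ t lam e a i ∧ t lam e a i ≤ w lam e (a + 2) i := by
  have hsu := w_le lam e he (show a ≤ a + 1 by omega) (show a + 1 ≤ M by omega) i
  have huv := w_le lam e he (show a + 1 ≤ a + 2 by omega) (show a + 2 ≤ M by omega) i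
  have hc := c_le lam e a i
  have hd := d_le lam e a i
  unfold t
  omega

/-- The Bender–Knuth switched (padded) filling. -/
def E' (a i j : ℕ) : ℕ :=
  if E lam e i j = a ∨ E lam e i j = a + 1 then
    (if j < t lam e a i then a else a + 1)
  else E lam e i j

lemma E'_eq_a_iff (he : IsSSYT lam e) (a : ℕ) (hab : a + 1 < M) (i j : ℕ) :
    E' lam e a i j = a ↔ (w lam e a i ≤ j ∧ j < t lam e a i) := by
  have ht := t_bounds lam e he a hab i
  have h1 := w_iff lam e he (show a ≤ M by omega) i j
  have h2 := w_iff lam e he (show a + 2 ≤ M by omega) i j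
  unfold E'
  split_ifs with h hlt
  · have hEa : a ≤ E lam e i j := by rcases h with h | h <;> omega
    simp only [true_iff]
    exact ⟨by omega, hlt⟩
  · have hEa : a ≤ E lam e i j := by rcases h with h | h <;> omega
    constructor
    · omega
    · rintro ⟨-, hc⟩
      omega
  · push_neg at h
    constructor
    · intro hc
      exact absurd hc h.1
    · rintro ⟨hs, hlt⟩
      exfalso
      omega

lemma E'_eq_b_iff (he : IsSSYT lam e) (a : ℕ) (hab : a + 1 < M) (i j : ℕ) :
    E' lam e a i j = a + 1 ↔ (t lam e a i ≤ j ∧ j < w lam e (a + 2) i) := by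
  have ht := t_bounds lam e he a hab i
  have h1 := w_iff lam e he (show a ≤ M by omega) i j
  have h2 := w_iff lam e he (show a + 2 ≤ M by omega) i j
  unfold E'
  split_ifs with h hlt
  · constructor
    · omega
    · rintro ⟨hc, -⟩
      omega
  · have hE2 : E lam e i j < a + 2 := by rcases h with h | h <;> omega
    simp only [true_iff]
    exact ⟨by omega, by omega⟩
  · push_neg at h
    constructor
    · intro hc
      exact absurd hc h.2
    · rintro ⟨hs, hlt⟩
      exfalso
      have := ht.1
      omega

lemma E'_eq_other_iff (a : ℕ) {b : ℕ} (hb1 : b ≠ a) (hb2 : b ≠ a + 1) (i j : ℕ) :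
    E' lam e a i j = b ↔ E lam e i j = b := by
  unfold E'
  split_ifs with h hlt
  · constructor
    · omega
    · intro hc
      rcases h with h | h <;> omega
  · constructor
    · omega
    · intro hc
      rcases h with h | h <;> omega
  · rfl

lemma E'_le (a : ℕ) (hab : a + 1 < M) (i j : ℕ) : E' lam e a i j ≤ M := by
  unfold E'
  split_ifs
  · omega
  · omega
  · exact E_le lam e i j

lemma E'_lt_M_iff (a : ℕ) (hab : a + 1 < M) (i j : ℕ) :
    E' lam e a i j < M ↔ E lam e i j < M := by
  unfold E'
  split_ifs with h hlt
  · rcases h with h | h <;> omega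
  · rcases h with h | h <;> omega
  · rfl

lemma E'_mono (he : IsSSYT lam e) (a : ℕ) (i : ℕ) : Monotone (E' lam e a i) := by
  intro j j' hjj'
  have hE := E_mono lam e he i hjj'
  by_cases h : (E lam e i j = a ∨ E lam e i j = a + 1) <;>
    by_cases h' : (E lam e i j' = a ∨ E lam e i j' = a + 1)
  · unfold E'
    rw [if_pos h, if_pos h']
    split_ifs <;> omega
  · have ha1 : a ≤ E lam e i j := by rcases h with h | h <;> omega
    have ha2 : a + 2 ≤ E lam e i j' := by
      push_neg at h'
      omega
    unfold E'
    rw [if_pos h, if_neg h']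
    split_ifs <;> omega
  · have ha1 : E lam e i j' ≤ a + 1 := by rcases h' with h' | h' <;> omega
    have ha2 : E lam e i j < a := by
      push_neg at h
      omega
    unfold E'
    rw [if_neg h, if_pos h']
    split_ifs <;> omega
  · unfold E'
    rw [if_neg h, if_neg h']
    exact hE

lemma E'_col (he : IsSSYT lam e) (hlam : Monotone lam) (a : ℕ) (hab : a + 1 < M)
    (i j : ℕ) (h : E' lam e a (i + 1) j < M) :
    E' lam e a i j < E' lam e a (i + 1) j := by
  rw [E'_lt_M_iff lam e a hab] at h
  have hxy := E_col lam e he hlam i j h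
  by_cases hx : (E lam e i j = a ∨ E lam e i j = a + 1) <;>
    by_cases hy : (E lam e (i + 1) j = a ∨ E lam e (i + 1) j = a + 1)
  · -- paired case
    have hxa : E lam e i j = a := by
      rcases hx with h1 | h1 <;> rcases hy with h2 | h2 <;> omega
    have hyb : E lam e (i + 1) j = a + 1 := by
      rcases hx with h1 | h1 <;> rcases hy with h2 | h2 <;> omega
    have hp := (paired_iff lam e he hlam a hab i j).mp ⟨hxa, hyb⟩
    have hp' := (paired_iff' lam e he hlam a hab i j).mp ⟨hxa, hyb⟩
    have h1 : E' lam e a i j = a := by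
      rw [E'_eq_a_iff lam e he a hab]
      refine ⟨hp.1, ?_⟩
      have hc : c lam e a i =
          min (w lam e (a + 1) i) (w lam e (a + 2) (i + 1)) - w lam e a i := rfl
      have hp1 := hp.1
      have hp2 := hp.2.1
      have hp3 := hp.2.2
      unfold t
      omega
    have h2 : E' lam e a (i + 1) j = a + 1 := by
      rw [E'_eq_b_iff lam e he a hab]
      refine ⟨?_, hp'.2⟩
      have hd : d lam e a (i + 1) =
          w lam e (a + 2) (i + 1) - max (w lam e (a + 1) (i + 1)) (w lam e a i) := rfl
      have hc := c_le lam e a (i + 1)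
      have hsu := w_le lam e he (show a ≤ a + 1 by omega) (show a + 1 ≤ M by omega) (i + 1)
      have huv := w_le lam e he (show a + 1 ≤ a + 2 by omega) (show a + 2 ≤ M by omega) (i + 1)
      have hmj : max (w lam e (a + 1) (i + 1)) (w lam e a i) ≤ j := hp'.1
      unfold t
      omega
    rw [h1, h2]
    omega
  · have ha1 : a ≤ E lam e i j := by rcases hx with h1 | h1 <;> omega
    have ha2 : a + 2 ≤ E lam e (i + 1) j := by
      push_neg at hy
      omega
    unfold E'
    rw [if_pos hx, if_neg hy]
    split_ifs <;> omega
  · have ha1 : E lam e (i + 1) j ≤ a + 1 := by rcases hy with h1 | h1 <;> omega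
    have ha2 : E lam e i j < a := by
      push_neg at hx
      omega
    unfold E'
    rw [if_neg hx, if_pos hy]
    split_ifs <;> omega
  · unfold E'
    rw [if_neg hx, if_neg hy]
    exact hxy

lemma count_E'_a (he : IsSSYT lam e) (a : ℕ) (hab : a + 1 < M) (i : ℕ) :
    ((Finset.range (K lam)).filter fun j => E' lam e a i j = a).card =
      t lam e a i - w lam e a i := by
  have ht := t_bounds lam e he a hab i
  have hfil : ((Finset.range (K lam)).filter fun j => E' lam e a i j = a) =
      Finset.Ico (w lam e a i) (t lam e a i) := by
    ext j
    simp only [Finset.mem_filter, Finset.mem_range, Finset.mem_Ico]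
    rw [E'_eq_a_iff lam e he a hab]
    constructor
    · rintro ⟨-, hp⟩
      exact hp
    · rintro ⟨hs, hlt⟩
      have hE : E lam e i j < a + 2 := by
        rw [w_iff lam e he (show a + 2 ≤ M by omega)]
        omega
      exact ⟨lt_K_of_E_lt lam e i j (by omega), hs, hlt⟩
  rw [hfil, Nat.card_Ico]

lemma count_E'_b (he : IsSSYT lam e) (a : ℕ) (hab : a + 1 < M) (i : ℕ) :
    ((Finset.range (K lam)).filter fun j => E' lam e a i j = a + 1).card =
      w lam e (a + 2) i - t lam e a i := by
  have ht := t_bounds lam e he a hab i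
  have hfil : ((Finset.range (K lam)).filter fun j => E' lam e a i j = a + 1) =
      Finset.Ico (t lam e a i) (w lam e (a + 2) i) := by
    ext j
    simp only [Finset.mem_filter, Finset.mem_range, Finset.mem_Ico]
    rw [E'_eq_b_iff lam e he a hab]
    constructor
    · rintro ⟨-, hp⟩
      exact hp
    · rintro ⟨hs, hlt⟩
      have hE : E lam e i j < a + 2 := by
        rw [w_iff lam e he (show a + 2 ≤ M by omega)]
        omega
      exact ⟨lt_K_of_E_lt lam e i j (by omega), hs, hlt⟩
  rw [hfil, Nat.card_Ico]

lemma count_E_a (he : IsSSYT lam e) (a : ℕ) (hab : a + 1 < M) (i : ℕ) :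
    ((Finset.range (K lam)).filter fun j => E lam e i j = a).card =
      w lam e (a + 1) i - w lam e a i := by
  have hfil : ((Finset.range (K lam)).filter fun j => E lam e i j = a) =
      Finset.Ico (w lam e a i) (w lam e (a + 1) i) := by
    ext j
    simp only [Finset.mem_filter, Finset.mem_range, Finset.mem_Ico]
    rw [eq_iff lam e he (show a + 1 ≤ M by omega)]
    constructor
    · rintro ⟨-, hp⟩
      exact hp
    · rintro ⟨hs, hlt⟩
      have hE : E lam e i j < a + 1 := by
        rw [w_iff lam e he (show a + 1 ≤ M by omega)]
        omega
      exact ⟨lt_K_of_E_lt lam e i j (by omega), hs, hlt⟩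
  rw [hfil, Nat.card_Ico]

lemma count_E_b (he : IsSSYT lam e) (a : ℕ) (hab : a + 1 < M) (i : ℕ) :
    ((Finset.range (K lam)).filter fun j => E lam e i j = a + 1).card =
      w lam e (a + 2) i - w lam e (a + 1) i := by
  have hfil : ((Finset.range (K lam)).filter fun j => E lam e i j = a + 1) =
      Finset.Ico (w lam e (a + 1) i) (w lam e (a + 2) i) := by
    ext j
    simp only [Finset.mem_filter, Finset.mem_range, Finset.mem_Ico]
    rw [eq_iff lam e he (show a + 1 + 1 ≤ M by omega)]
    constructor
    · rintro ⟨-, hp⟩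
      exact hp
    · rintro ⟨hs, hlt⟩
      have hE : E lam e i j < a + 2 := by
        rw [w_iff lam e he (show a + 2 ≤ M by omega)]
        omega
      exact ⟨lt_K_of_E_lt lam e i j (by omega), hs, hlt⟩
  rw [hfil, Nat.card_Ico]

lemma c_last (a : ℕ) (hab : a + 1 < M) (m : ℕ) (hm : M = m + 1) :
    c lam e a m = 0 := by
  unfold c
  rw [w_top lam e (show a + 2 ≤ M by omega) (by omega)]
  omega

lemma sum_c_eq_sum_d (he : IsSSYT lam e) (hlam : Monotone lam) (a : ℕ) (hab : a + 1 < M) :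
    ∑ i ∈ Finset.range M, c lam e a i = ∑ i ∈ Finset.range M, d lam e a i := by
  obtain ⟨m, hM⟩ : ∃ m, M = m + 1 := ⟨M - 1, by omega⟩
  rw [show Finset.range M = Finset.range (m + 1) from by rw [hM]]
  rw [Finset.sum_range_succ' (d lam e a) m]
  rw [Finset.sum_range_succ (c lam e a) m]
  have hd0 : d lam e a 0 = 0 := rfl
  rw [hd0, c_last lam e a (by omega) m hM]
  rw [add_zero, add_zero]
  exact Finset.sum_congr rfl fun i _ => c_eq_d lam e he hlam a hab i

lemma E_eq_of (f : ∀ i : Fin M, Fin (lam i.rev) → Fin M) (g : ℕ → ℕ → ℕ)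
    (hval : ∀ (i : Fin M) (j : Fin (lam i.rev)), (f i j : ℕ) = g i.val j.val)
    (hout : ∀ i j, (∀ hi : i < M, lam (Fin.rev ⟨i, hi⟩) ≤ j) → g i j = M) :
    ∀ i j, E lam f i j = g i j := by
  intro i j
  by_cases h1 : i < M
  · by_cases h2 : j < lam (Fin.rev ⟨i, h1⟩)
    · rw [E, dif_pos h1, dif_pos h2]
      exact hval ⟨i, h1⟩ ⟨j, h2⟩
    · rw [E_pad lam f i j (fun hi => le_of_not_gt h2),
        hout i j (fun hi => le_of_not_gt h2)]
  · rw [E_pad lam f i j (fun hi => absurd hi h1), hout i j (fun hi => absurd hi h1)]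

lemma count_row_eq (k : Fin M) (i : Fin M) :
    (Finset.univ.filter fun j : Fin (lam i.rev) => e i j = k).card =
      ((Finset.range (K lam)).filter fun j => E lam e i.val j = k.val).card := by
  calc (Finset.univ.filter fun j : Fin (lam i.rev) => e i j = k).card
      = ∑ j : Fin (lam i.rev),
          if E lam e i.val (j : ℕ) = (k : ℕ) then 1 else 0 := by
        rw [Finset.card_filter]
        refine Finset.sum_congr rfl fun j _ => ?_
        rw [E_val lam e i j]
        simp [Fin.ext_iff]
    _ = ∑ j ∈ Finset.range (lam i.rev),
          if E lam e i.val j = (k : ℕ) then 1 else 0 :=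
        Fin.sum_univ_eq_sum_range
          (fun jn => if E lam e i.val jn = (k : ℕ) then 1 else 0) (lam i.rev)
    _ = ∑ j ∈ Finset.range (K lam),
          if E lam e i.val j = (k : ℕ) then 1 else 0 := by
        refine Finset.sum_subset (Finset.range_subset_range.mpr (len_le_K lam i.val i.isLt)) ?_
        intro x _ hx
        rw [Finset.mem_range] at hx
        push_neg at hx
        rw [E_pad lam e i.val x (fun hi => hx)]
        rw [if_neg (by have := k.isLt; omega)]
    _ = ((Finset.range (K lam)).filter fun j => E lam e i.val j = k.val).card :=
        (Finset.card_filter _ _).symm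

lemma weight_eq (T : SSYT M lam) (k : Fin M) :
    T.weight k = ∑ i ∈ Finset.range M,
      ((Finset.range (K lam)).filter fun j => E lam T.1 i j = k.val).card := by
  calc T.weight k
      = ∑ i : Fin M,
          ((Finset.range (K lam)).filter fun j => E lam T.1 (i : ℕ) j = k.val).card :=
        Finset.sum_congr rfl fun i _ => count_row_eq lam T.1 k i
    _ = ∑ i ∈ Finset.range M,
          ((Finset.range (K lam)).filter fun j => E lam T.1 i j = k.val).card :=
        Fin.sum_univ_eq_sum_range
          (fun i => ((Finset.range (K lam)).filter fun j =>
            E lam T.1 i j = k.val).card) M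

lemma bender_knuth (hlam : Monotone lam) (T : SSYT M lam) (a : ℕ) (hab : a + 1 < M) :
    ∃ T' : SSYT M lam, ∀ k : Fin M,
      T'.weight k = T.weight (Equiv.swap ⟨a, by omega⟩ ⟨a + 1, hab⟩ k) := by
  obtain ⟨e, he⟩ := T
  have hcell : ∀ (i : Fin M) (j : Fin (lam i.rev)), E' lam e a i.val j.val < M := by
    intro i j
    rw [E'_lt_M_iff lam e a hab, E_val lam e i j]
    exact (e i j).isLt
  set fn : ∀ i : Fin M, Fin (lam i.rev) → Fin M :=
    fun i j => ⟨E' lam e a i.val j.val, hcell i j⟩ with hfn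
  have hE'e : ∀ i j, E lam fn i j = E' lam e a i j := by
    refine E_eq_of lam fn (E' lam e a) (fun i j => rfl) (fun i j h => ?_)
    unfold E'
    rw [E_pad lam e i j h, if_neg (by omega)]
  have hSS : IsSSYT lam fn := by
    constructor
    · intro i j j' hjj'
      exact Fin.mk_le_mk.mpr (E'_mono lam e he a i.val hjj')
    · intro i i' hii' j hj
      refine Fin.mk_lt_mk.mpr ?_
      exact col_trans (E'_col lam e he hlam a hab) i.val i'.val j.val hii' (hcell i' j)
  have hfst : ((⟨fn, hSS⟩ : SSYT M lam)).1 = fn := rfl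
  have hfst2 : ((⟨e, he⟩ : SSYT M lam)).1 = e := rfl
  refine ⟨⟨fn, hSS⟩, ?_⟩
  intro k
  have hsu := fun i => w_le lam e he (show a ≤ a + 1 by omega) (show a + 1 ≤ M by omega) i
  have huv := fun i =>
    w_le lam e he (show a + 1 ≤ a + 2 by omega) (show a + 2 ≤ M by omega) i
  have hc := fun i => c_le lam e a i
  have hd := fun i => d_le lam e a i
  have hcd := sum_c_eq_sum_d lam e he hlam a hab
  have haM : a < M := Nat.lt_of_succ_lt hab
  by_cases hk1 : (k : ℕ) = a
  · have hk : k = ⟨a, haM⟩ := Fin.ext hk1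
    have hswap : Equiv.swap (⟨a, haM⟩ : Fin M) ⟨a + 1, hab⟩ k = ⟨a + 1, hab⟩ := by
      rw [hk]
      exact Equiv.swap_apply_left _ _
    rw [hswap, weight_eq lam ⟨fn, hSS⟩, weight_eq lam ⟨e, he⟩, hfst, hfst2]
    have hL : ∑ i ∈ Finset.range M,
        ((Finset.range (K lam)).filter fun j => E lam fn i j = (k : ℕ)).card =
        ∑ i ∈ Finset.range M, (t lam e a i - w lam e a i) := by
      refine Finset.sum_congr rfl fun i _ => ?_
      rw [show ((Finset.range (K lam)).filter fun j => E lam fn i j = (k : ℕ)) =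
          ((Finset.range (K lam)).filter fun j => E' lam e a i j = a) from
        Finset.filter_congr fun j _ => by rw [hE'e i j, hk1]]
      exact count_E'_a lam e he a hab i
    have hR : ∑ i ∈ Finset.range M,
        ((Finset.range (K lam)).filter fun j =>
          E lam e i j = ((⟨a + 1, hab⟩ : Fin M) : ℕ)).card =
        ∑ i ∈ Finset.range M, (w lam e (a + 2) i - w lam e (a + 1) i) := by
      refine Finset.sum_congr rfl fun i _ => ?_
      exact count_E_b lam e he a hab i
    rw [hL, hR]
    have hrow : ∀ i, (t lam e a i - w lam e a i) + d lam e a i =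
        (w lam e (a + 2) i - w lam e (a + 1) i) + c lam e a i := by
      intro i
      have h1 := hsu i
      have h2 := huv i
      have h3 := hc i
      have h4 := hd i
      unfold t
      omega
    have h1 : ∑ i ∈ Finset.range M, ((t lam e a i - w lam e a i) + d lam e a i) =
        ∑ i ∈ Finset.range M,
          ((w lam e (a + 2) i - w lam e (a + 1) i) + c lam e a i) :=
      Finset.sum_congr rfl fun i _ => hrow i
    rw [Finset.sum_add_distrib, Finset.sum_add_distrib] at h1
    omega
  · by_cases hk2 : (k : ℕ) = a + 1
    · have hk : k = ⟨a + 1, hab⟩ := Fin.ext hk2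
      have hswap : Equiv.swap (⟨a, haM⟩ : Fin M) ⟨a + 1, hab⟩ k = ⟨a, haM⟩ := by
        rw [hk]
        exact Equiv.swap_apply_right _ _
      rw [hswap, weight_eq lam ⟨fn, hSS⟩, weight_eq lam ⟨e, he⟩, hfst, hfst2]
      have hL : ∑ i ∈ Finset.range M,
          ((Finset.range (K lam)).filter fun j => E lam fn i j = (k : ℕ)).card =
          ∑ i ∈ Finset.range M, (w lam e (a + 2) i - t lam e a i) := by
        refine Finset.sum_congr rfl fun i _ => ?_
        rw [show ((Finset.range (K lam)).filter fun j => E lam fn i j = (k : ℕ)) =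
            ((Finset.range (K lam)).filter fun j => E' lam e a i j = a + 1) from
          Finset.filter_congr fun j _ => by rw [hE'e i j, hk2]]
        exact count_E'_b lam e he a hab i
      have hR : ∑ i ∈ Finset.range M,
          ((Finset.range (K lam)).filter fun j =>
            E lam e i j = ((⟨a, haM⟩ : Fin M) : ℕ)).card =
          ∑ i ∈ Finset.range M, (w lam e (a + 1) i - w lam e a i) := by
        refine Finset.sum_congr rfl fun i _ => ?_
        exact count_E_a lam e he a hab i
      rw [hL, hR]
      have hrow : ∀ i, (w lam e (a + 2) i - t lam e a i) + c lam e a i =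
          (w lam e (a + 1) i - w lam e a i) + d lam e a i := by
        intro i
        have h1 := hsu i
        have h2 := huv i
        have h3 := hc i
        have h4 := hd i
        unfold t
        omega
      have h1 : ∑ i ∈ Finset.range M,
          ((w lam e (a + 2) i - t lam e a i) + c lam e a i) =
          ∑ i ∈ Finset.range M,
            ((w lam e (a + 1) i - w lam e a i) + d lam e a i) :=
        Finset.sum_congr rfl fun i _ => hrow i
      rw [Finset.sum_add_distrib, Finset.sum_add_distrib] at h1
      omega
    · have hswap : Equiv.swap (⟨a, haM⟩ : Fin M) ⟨a + 1, hab⟩ k = k := by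
        refine Equiv.swap_apply_of_ne_of_ne ?_ ?_
        · intro h
          exact hk1 (by rw [h])
        · intro h
          exact hk2 (by rw [h])
      rw [hswap, weight_eq lam ⟨fn, hSS⟩, weight_eq lam ⟨e, he⟩, hfst, hfst2]
      refine Finset.sum_congr rfl fun i _ => ?_
      rw [show ((Finset.range (K lam)).filter fun j => E lam fn i j = (k : ℕ)) =
          ((Finset.range (K lam)).filter fun j => E lam e i j = (k : ℕ)) from
        Finset.filter_congr fun j _ => by
          rw [hE'e i j]
          exact E'_eq_other_iff lam e a hk1 hk2 i j]

end BKX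




/-- If there is a semistandard Young tableau of shape `lam` with weight vector `α(T)`,
then for every permutation `τ` there is a semistandard Young tableau of shape `lam`
whose weight vector is the permuted vector `k ↦ α_{τ⁻¹ k}(T)`. -/
theorem ssyt_weight_perm (M : ℕ) (lam : Fin M → ℕ) (hlam : Monotone lam)
    (T : SSYT M lam) (τ : Equiv.Perm (Fin M)) :
    ∃ T' : SSYT M lam, ∀ k : Fin M, T'.weight k = T.weight (τ⁻¹ k) := by
  rcases Nat.eq_zero_or_pos M with hM | hM
  · exact ⟨T, fun k => absurd k.isLt (by omega)⟩
  obtain ⟨n, rfl⟩ : ∃ n, M = n + 1 := ⟨M - 1, by omega⟩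
  have key : ∀ σ ∈ Submonoid.closure
      (Set.range fun i : Fin n => Equiv.swap i.castSucc i.succ),
      ∀ U : SSYT (n + 1) lam, ∃ U' : SSYT (n + 1) lam,
        ∀ k : Fin (n + 1), U'.weight k = U.weight (σ⁻¹ k) := by
    intro σ hσ
    induction hσ using Submonoid.closure_induction with
    | mem g hg =>
      intro U
      obtain ⟨i, rfl⟩ := hg
      obtain ⟨U', hU'⟩ := BKX.bender_knuth lam hlam U i.val
        (by have := i.isLt; omega)
      refine ⟨U', fun k => ?_⟩
      rw [hU' k]
      congr 1
    | one =>
      intro U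
      exact ⟨U, fun k => by simp⟩
    | mul σ1 σ2 hσ1 hσ2 ih1 ih2 =>
      intro U
      obtain ⟨U1, h1⟩ := ih2 U
      obtain ⟨U2, h2⟩ := ih1 U1
      refine ⟨U2, fun k => ?_⟩
      rw [h2, h1]
      simp [mul_inv_rev]
  exact key τ (by rw [Equiv.Perm.mclosure_swap_castSucc_succ]; trivial) T
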